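/- arXiv:2308.06839 — 2 statements merged into one kernel-verified Lean document; each statement's English description precedes it below -/
import Mathlib

section
/- Suppose 0 ≤ ν_k ≤ ν_{k-1} ≤ ⋯ ≤ ν_1 are real numbers with ν_1 + ν_2 + ⋯ + ν_k ≥ 1, ν_1 < 5/8 − 8ϖ where ϖ = 1/1168, and for every subset I ⊆ {1,…,k} the sum Σ_{i∈I} ν_i does not lie in the closed interval [3/8 + 8ϖ, 5/8 − 8ϖ]. Then ν_2 + ν_3 > 5/8 − 8ϖ. -/
/-- The combinatorial lemma for the Type III case: under the stated conditions
on the exponents `ν_i`, one has `ν₂ + ν₃ > 5/8 − 8ϖ`. -/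
theorem stmt3 (k : ℕ) (hk : 4 ≤ k) (ϖ : ℝ) (hϖ : ϖ = 1 / 1168) (ν : ℕ → ℝ)
    (hnonneg : ∀ i ∈ Finset.Icc 1 k, 0 ≤ ν i)
    (hmono : ∀ i j, 1 ≤ i → i ≤ j → j ≤ k → ν j ≤ ν i)
    (hsum : 1 ≤ ∑ i ∈ Finset.Icc 1 k, ν i)
    (hν1 : ν 1 < 5 / 8 - 8 * ϖ)
    (hI : ∀ I ⊆ Finset.Icc 1 k,
      (∑ i ∈ I, ν i) ∉ Set.Icc (3 / 8 + 8 * ϖ) (5 / 8 - 8 * ϖ)) :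
    5 / 8 - 8 * ϖ < ν 2 + ν 3 := by
  subst hϖ
  set A : ℝ := 3 / 8 + 8 * (1 / 1168) with hA
  set B : ℝ := 5 / 8 - 8 * (1 / 1168) with hB
  by_contra hcon
  push_neg at hcon
  -- ν 1 < A
  have hI' : ∀ I ⊆ Finset.Icc 1 k, A ≤ ∑ i ∈ I, ν i → B < ∑ i ∈ I, ν i := by
    intro I hIk hAle
    by_contra h
    push_neg at h
    exact hI I hIk ⟨hAle, h⟩
  have h1 : ν 1 < A := by
    have h := hI' {1} (by simp [Finset.mem_Icc]; omega)
    simp at h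
    by_contra hc
    push_neg at hc
    linarith [h hc]
  have h23 : ν 2 + ν 3 < A := by
    have h := hI' ({2, 3} : Finset ℕ) (by
      intro x hx
      simp at hx
      simp [Finset.mem_Icc]; omega)
    rw [Finset.sum_pair (by norm_num : (2:ℕ) ≠ 3)] at h
    by_contra hc
    push_neg at hc
    linarith [h hc]
  have h32 : ν 3 ≤ ν 2 := hmono 2 3 (by omega) (by omega) (by omega)
  have h12 : ν 2 ≤ ν 1 := hmono 1 2 (by omega) (by omega) (by omega)
  -- case split on ν 1 + ν 2
  have hsum12 : ν 1 + ν 2 < A ∨ B < ν 1 + ν 2 := by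
    have h := hI' ({1, 2} : Finset ℕ) (by
      intro x hx
      simp at hx
      simp [Finset.mem_Icc]; omega)
    rw [Finset.sum_pair (by norm_num : (1:ℕ) ≠ 2)] at h
    rcases lt_or_ge (ν 1 + ν 2) A with h' | h'
    · exact Or.inl h'
    · exact Or.inr (h h')
  rcases hsum12 with hcase | hcase
  · -- Case 1: all partial sums stay below A
    have key : ∀ j, 2 ≤ j → j ≤ k → ∑ i ∈ Finset.Icc 1 j, ν i < A := by
      intro j hj
      induction j, hj using Nat.le_induction with
      | base =>
        intro _
        rw [show Finset.Icc 1 2 = ({1, 2} : Finset ℕ) from rfl,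
          Finset.sum_pair (by norm_num : (1:ℕ) ≠ 2)]
        exact hcase
      | succ n hn ih =>
        intro hnk
        have ihn := ih (by omega)
        rw [Finset.sum_Icc_succ_top (by omega : 1 ≤ n + 1)]
        have hle : ν (n + 1) ≤ ν 3 := hmono 3 (n + 1) (by omega) (by omega) (by omega)
        -- ν 3 < A / 2
        have h3half : 2 * ν 3 < A := by linarith
        have hB' : ∑ i ∈ Finset.Icc 1 n, ν i + ν (n + 1) < B := by
          rw [hA, hB] at *; linarith
        by_contra hc
        push_neg at hc
        have := hI' (Finset.Icc 1 (n + 1)) (by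
          intro x hx; simp [Finset.mem_Icc] at *; omega)
          (by rw [Finset.sum_Icc_succ_top (by omega : 1 ≤ n + 1)]; exact hc)
        rw [Finset.sum_Icc_succ_top (by omega : 1 ≤ n + 1)] at this
        linarith
    have := key k (by omega) le_rfl
    rw [hA] at this
    linarith
  · -- Case 2: ν 2 > B - A, so ν 3 < 2A - B and sums skipping index 2 stay below A
    have hν2 : B - A < ν 2 := by linarith
    have hν3 : ν 3 < 2 * A - B := by linarith
    have key : ∀ j, 2 ≤ j → j ≤ k →
        ν 1 + ∑ i ∈ Finset.Icc 3 j, ν i < A := by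
      intro j hj
      induction j, hj using Nat.le_induction with
      | base =>
        intro _
        rw [show Finset.Icc 3 2 = (∅ : Finset ℕ) from rfl]
        simpa using h1
      | succ n hn ih =>
        intro hnk
        have ihn := ih (by omega)
        rw [Finset.sum_Icc_succ_top (by omega : 3 ≤ n + 1)]
        have hle : ν (n + 1) ≤ ν 3 := hmono 3 (n + 1) (by omega) (by omega) (by omega)
        have hB' : ν 1 + (∑ i ∈ Finset.Icc 3 n, ν i + ν (n + 1)) < B := by
          rw [hA, hB] at *; linarith
        by_contra hc
        push_neg at hc
        have hne : (1 : ℕ) ∉ Finset.Icc 3 (n + 1) := by simp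
        have := hI' (insert 1 (Finset.Icc 3 (n + 1))) (by
          intro x hx; simp [Finset.mem_Icc] at *; omega)
          (by
            rw [Finset.sum_insert hne,
              Finset.sum_Icc_succ_top (by omega : 3 ≤ n + 1)]
            linarith)
        rw [Finset.sum_insert hne,
          Finset.sum_Icc_succ_top (by omega : 3 ≤ n + 1)] at this
        linarith
    have hkey := key k (by omega) le_rfl
    -- total sum decomposition
    have hdecomp : ∑ i ∈ Finset.Icc 1 k, ν i
        = ν 1 + (ν 2 + ∑ i ∈ Finset.Icc 3 k, ν i) := by
      have h1m : (1 : ℕ) ∉ insert 2 (Finset.Icc 3 k) := by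
        simp [Finset.mem_Icc]
      have h2m : (2 : ℕ) ∉ Finset.Icc 3 k := by simp
      rw [show Finset.Icc 1 k = insert 1 (insert 2 (Finset.Icc 3 k)) by
        ext x; simp [Finset.mem_Icc]; omega]
      rw [Finset.sum_insert h1m, Finset.sum_insert h2m]
    rw [hdecomp] at hsum
    rw [hA, hB] at *
    linarith
end

section
/- Let d ≥ 1 be squarefree, suppose X^{(1/2) − 1/(12(k+1))} < d < X^{1/2 + 2ϖ} with ϖ = 1/1168, gcd(d, P₀) < X^ϖ where P₀ = ∏_{p ≤ D₀} p with D₀ = X^{ϖ^{4/3}}, and gcd(d, P₁) > X^{1/8 − 4ϖ} where P₁ = ∏_{p ≤ X^ϖ} p. Then for any R* with X^{2ϖ} ≤ R* ≤ X^{45ϖ}, there exists a factorization d = q·r with X^{−ϖ} R* < r < R* and gcd(q, P₀) = 1. -/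
open Finset

lemma greedy (B : ℝ) : ∀ m : ℕ, Squarefree m →
    ∀ s : ℕ, 0 < s → ∀ T : ℝ, (s : ℝ) < T → T < (s : ℝ) * m →
    (∀ p : ℕ, p.Prime → p ∣ m → (p : ℝ) ≤ B) →
    ∃ r : ℕ, s ∣ r ∧ r ∣ s * m ∧ T < (r : ℝ) ∧ (r : ℝ) < T * B := by
  intro m
  induction m using Nat.strong_induction_on with
  | _ m ih =>
    intro hm s hs T hsT hTm hB
    have hT0 : (0 : ℝ) < T := lt_of_le_of_lt (by exact_mod_cast Nat.zero_le s) hsT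
    have hm0 : m ≠ 0 := hm.ne_zero
    have hm1 : m ≠ 1 := by
      rintro rfl
      simp at hTm
      linarith
    have hmem : m.primeFactors.Nonempty := Nat.nonempty_primeFactors.2 (by omega)
    set p := m.primeFactors.max' hmem with hp
    have hpmem : p ∈ m.primeFactors := m.primeFactors.max'_mem hmem
    have hpp : p.Prime := Nat.prime_of_mem_primeFactors hpmem
    have hpd : p ∣ m := Nat.dvd_of_mem_primeFactors hpmem
    have hpB : (p : ℝ) ≤ B := hB p hpp hpd
    have hp0 : 0 < p := hpp.pos
    set m' := m / p with hm'
    have hmm : m = p * m' := (Nat.mul_div_cancel' hpd).symm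
    have hm'0 : m' ≠ 0 := by
      intro h; rw [h, mul_zero] at hmm; exact hm0 hmm
    rcases lt_trichotomy ((s * p : ℕ) : ℝ) T with hc | hc | hc
    · -- recurse with s' = s * p, m'
      have hm'lt : m' < m := by
        rw [hmm]
        have := hpp.two_le
        nlinarith [Nat.pos_of_ne_zero hm'0]
      have hm'sf : Squarefree m' := hm.squarefree_of_dvd ⟨p, by rw [hmm]; ring⟩
      have hTm' : T < ((s * p : ℕ) : ℝ) * m' := by
        push_cast
        rw [mul_assoc, ← Nat.cast_mul, ← hmm]
        exact_mod_cast hTm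
      obtain ⟨r, h1, h2, h3, h4⟩ := ih m' hm'lt hm'sf (s * p) (Nat.mul_pos hs hp0) T hc hTm'
        (fun q hq hqd => hB q hq (hqd.trans ⟨p, by rw [hmm]; ring⟩))
      refine ⟨r, (dvd_mul_right s p).trans h1, ?_, h3, h4⟩
      rw [hmm, ← mul_assoc]
      exact h2
    · -- equality case: take r = s * p * q with q another (smaller) prime factor
      have hm'1 : m' ≠ 1 := by
        rintro h
        rw [h, mul_one] at hmm
        rw [hmm] at hTm
        push_cast at hTm hc
        linarith
      set q := m'.minFac with hq
      have hqp : q.Prime := Nat.minFac_prime hm'1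
      have hqm' : q ∣ m' := Nat.minFac_dvd m'
      have hqm : q ∣ m := hqm'.trans ⟨p, by rw [hmm]; ring⟩
      have hne : q ≠ p := by
        intro h
        have hsq : p * p ∣ m := by
          rw [hmm]; exact mul_dvd_mul_left p (h ▸ hqm')
        exact hpp.not_isUnit (hm p hsq)
      have hqlt : q < p := lt_of_le_of_ne
        (m.primeFactors.le_max' q (Nat.mem_primeFactors.2 ⟨hqp, hqm, hm0⟩)) hne
      have hcop : Nat.Coprime p q := (Nat.coprime_primes hpp hqp).2 (Ne.symm hne)
      refine ⟨s * (p * q), dvd_mul_right s _, mul_dvd_mul_left s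
        (hcop.mul_dvd_of_dvd_of_dvd hpd hqm), ?_, ?_⟩
      · push_cast
        rw [← mul_assoc]
        push_cast at hc
        rw [hc]
        have h2q : (2 : ℝ) ≤ q := by exact_mod_cast hqp.two_le
        nlinarith
      · push_cast
        rw [← mul_assoc]
        push_cast at hc
        rw [hc]
        have hqlt' : (q : ℝ) < p := by exact_mod_cast hqlt
        have : T * q < T * p := by nlinarith
        nlinarith [mul_le_mul_of_nonneg_left hpB hT0.le]
    · -- r = s * p
      refine ⟨s * p, dvd_mul_right s p, by rw [hmm, ← mul_assoc]; exact Dvd.intro m' rfl, hc, ?_⟩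
      push_cast
      have : (s : ℝ) * p < T * p := by
        apply mul_lt_mul_of_pos_right hsT
        exact_mod_cast hp0
      calc (s : ℝ) * p < T * p := this
        _ ≤ T * B := mul_le_mul_of_nonneg_left hpB hT0.le

/-- The factorization (well-factorable moduli) lemma in the small-`R*` range:
a squarefree modulus `d` satisfying the stated size and smoothness constraints
admits a factorization `d = q·r` with `X^{-ϖ} R* < r < R*` and `gcd(q, P₀) = 1`. -/
theorem stmt6 (k : ℕ) (X ϖ : ℝ) (hϖ : ϖ = 1 / 1168) (hX : 1 < X)
    (d : ℕ) (hsf : Squarefree d)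
    (hd1 : X ^ ((1 : ℝ) / 2 - 1 / (12 * (k + 1))) < (d : ℝ))
    (hd2 : (d : ℝ) < X ^ ((1 : ℝ) / 2 + 2 * ϖ))
    (hP0 : (Nat.gcd d (∏ p ∈ Finset.filter Nat.Prime
        (Finset.Icc 2 ⌊X ^ (ϖ ^ ((4 : ℝ) / 3))⌋₊), p) : ℝ) < X ^ ϖ)
    (hP1 : X ^ ((1 : ℝ) / 8 - 4 * ϖ) < (Nat.gcd d (∏ p ∈ Finset.filter Nat.Prime
        (Finset.Icc 2 ⌊X ^ ϖ⌋₊), p) : ℝ))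
    (R : ℝ) (hR1 : X ^ (2 * ϖ) ≤ R) (hR2 : R ≤ X ^ (45 * ϖ)) :
    ∃ q r : ℕ, d = q * r ∧ X ^ (-ϖ) * R < (r : ℝ) ∧ (r : ℝ) < R ∧
      Nat.gcd q (∏ p ∈ Finset.filter Nat.Prime
        (Finset.Icc 2 ⌊X ^ (ϖ ^ ((4 : ℝ) / 3))⌋₊), p) = 1 := by
  have hX0 : (0 : ℝ) < X := lt_trans one_pos hX
  have hϖ0 : (0 : ℝ) < ϖ := by rw [hϖ]; norm_num
  set P0 : ℕ := ∏ p ∈ Finset.filter Nat.Prime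
      (Finset.Icc 2 ⌊X ^ (ϖ ^ ((4 : ℝ) / 3))⌋₊), p with hP0def
  set P1 : ℕ := ∏ p ∈ Finset.filter Nat.Prime
      (Finset.Icc 2 ⌊X ^ ϖ⌋₊), p with hP1def
  set A : ℕ := Nat.gcd d P0 with hA
  set g : ℕ := Nat.gcd d P1 with hg
  have hd0 : 0 < d := Nat.pos_of_ne_zero hsf.ne_zero
  have hA0 : 0 < A := Nat.gcd_pos_of_pos_left P0 hd0
  -- P0 ∣ P1
  have hfloors : ⌊X ^ (ϖ ^ ((4 : ℝ) / 3))⌋₊ ≤ ⌊X ^ ϖ⌋₊ := by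
    apply Nat.floor_le_floor
    apply Real.rpow_le_rpow_of_exponent_le hX.le
    calc ϖ ^ ((4 : ℝ) / 3) ≤ ϖ ^ (1 : ℝ) := by
          apply Real.rpow_le_rpow_of_exponent_ge hϖ0 (by rw [hϖ]; norm_num)
          norm_num
      _ = ϖ := Real.rpow_one ϖ
  have hP0P1 : P0 ∣ P1 :=
    Finset.prod_dvd_prod_of_subset _ _ _
      (Finset.filter_subset_filter _ (Finset.Icc_subset_Icc_right hfloors))
  have hAg : A ∣ g := Nat.gcd_dvd_gcd_of_dvd_right d hP0P1
  have hgd : g ∣ d := Nat.gcd_dvd_left d P1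
  have hgsf : Squarefree g := hsf.squarefree_of_dvd hgd
  set m : ℕ := g / A with hm
  have hgm : g = A * m := (Nat.mul_div_cancel' hAg).symm
  have hmsf : Squarefree m := hgsf.squarefree_of_dvd ⟨A, by rw [hgm]; ring⟩
  -- all prime factors of m are at most X^ϖ
  have hprimes : ∀ p : ℕ, p.Prime → p ∣ m → (p : ℝ) ≤ X ^ ϖ := by
    intro p hp hpm
    have hpg : p ∣ g := hpm.trans ⟨A, by rw [hgm]; ring⟩
    have hpP1 : p ∣ P1 := hpg.trans (Nat.gcd_dvd_right d P1)
    obtain ⟨p', hp'mem, hpp'⟩ := hp.prime.exists_mem_finset_dvd hpP1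
    have hp' : p'.Prime := (Finset.mem_filter.1 hp'mem).2
    have : p = p' := (Nat.prime_dvd_prime_iff_eq hp hp').1 hpp'
    subst this
    have hle : p ≤ ⌊X ^ ϖ⌋₊ := (Finset.mem_Icc.1 (Finset.mem_filter.1 hp'mem).1).2
    calc (p : ℝ) ≤ (⌊X ^ ϖ⌋₊ : ℝ) := by exact_mod_cast hle
      _ ≤ X ^ ϖ := Nat.floor_le (Real.rpow_nonneg hX0.le ϖ)
  set T : ℝ := X ^ (-ϖ) * R with hT
  -- A < T
  have hXϖT : X ^ ϖ ≤ T := by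
    rw [hT]
    calc X ^ ϖ = X ^ (-ϖ) * X ^ (2 * ϖ) := by
          rw [← Real.rpow_add hX0]; ring_nf
      _ ≤ X ^ (-ϖ) * R := by
          apply mul_le_mul_of_nonneg_left hR1 (Real.rpow_nonneg hX0.le _)
  have hAT : (A : ℝ) < T := lt_of_lt_of_le hP0 hXϖT
  -- T < A * m = g
  have hTR : T ≤ R := by
    rw [hT]
    have h1 : X ^ (-ϖ) ≤ 1 :=
      Real.rpow_le_one_of_one_le_of_nonpos hX.le (by linarith)
    have hR0 : 0 ≤ R := le_trans (Real.rpow_nonneg hX0.le _) hR1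
    nlinarith
  have hTg : T < (A : ℝ) * m := by
    have h1 : X ^ (45 * ϖ) ≤ X ^ ((1 : ℝ) / 8 - 4 * ϖ) := by
      apply Real.rpow_le_rpow_of_exponent_le hX.le
      rw [hϖ]; norm_num
    have h2 : (g : ℝ) = (A : ℝ) * m := by exact_mod_cast congrArg Nat.cast hgm
    rw [← h2]
    calc T ≤ R := hTR
      _ ≤ X ^ (45 * ϖ) := hR2
      _ ≤ X ^ ((1 : ℝ) / 8 - 4 * ϖ) := h1
      _ < g := hP1
  -- apply greedy
  obtain ⟨r, hAr, hrg, hTr, hrTB⟩ := greedy (X ^ ϖ) m hmsf A hA0 T hAT hTg hprimes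
  have hTBR : T * X ^ ϖ = R := by
    rw [hT, mul_assoc, mul_comm R, ← mul_assoc, ← Real.rpow_add hX0]
    simp
  have hrd : r ∣ d := (hrg.trans (by rw [← hgm])).trans hgd
  refine ⟨d / r, r, (Nat.div_mul_cancel hrd).symm, hTr, by
    rw [← hTBR]; exact hrTB, ?_⟩
  -- coprimality of q = d / r with P0
  by_contra hne
  set q : ℕ := d / r with hq
  set G : ℕ := Nat.gcd q P0 with hG
  have hp : G.minFac.Prime := Nat.minFac_prime hne
  have hpq : G.minFac ∣ q := (Nat.minFac_dvd G).trans (Nat.gcd_dvd_left q P0)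
  have hpP0 : G.minFac ∣ P0 := (Nat.minFac_dvd G).trans (Nat.gcd_dvd_right q P0)
  have hqd : q ∣ d := Nat.div_dvd_of_dvd hrd
  have hpd : G.minFac ∣ d := hpq.trans hqd
  have hpA : G.minFac ∣ A := Nat.dvd_gcd hpd hpP0
  have hpr : G.minFac ∣ r := hpA.trans hAr
  have hsq : G.minFac * G.minFac ∣ d := by
    have : q * r = d := Nat.div_mul_cancel hrd
    rw [← this]
    exact mul_dvd_mul hpq hpr
  exact hp.not_isUnit (hsf G.minFac hsq)
end
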